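/- For every a ∈ ℝ⁵ and λ > 0, the function δ_{a,λ}(x) = c₀ λ^{1/2} (1 + λ²|x−a|²)^{−1/2} with c₀ = 105^{1/8} satisfies Δ²δ_{a,λ} = δ_{a,λ}⁹ pointwise on ℝ⁵. -/

import Mathlib

open MeasureTheory Real Filter Topology

noncomputable section

abbrev E5 := EuclideanSpace ℝ (Fin 5)

/-- `c₀ = 105^{1/8}`. -/
def c0 : ℝ := (105 : ℝ) ^ ((1:ℝ)/8)

/-- The standard bubble `δ_{a,λ}(x) = c₀ λ^{1/2}(1+λ²|x−a|²)^{−1/2}`. -/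
def deltaFn (a : E5) (l : ℝ) (x : E5) : ℝ :=
  c0 * l ^ ((1:ℝ)/2) * (1 + l ^ 2 * ‖x - a‖ ^ 2) ^ (-(1:ℝ)/2)

/-- The Laplacian on `ℝ⁵`, as a sum of second partial derivatives. -/
def lap (f : E5 → ℝ) (x : E5) : ℝ :=
  ∑ i : Fin 5, fderiv ℝ (fun y => fderiv ℝ f y (EuclideanSpace.single i 1)) x
      (EuclideanSpace.single i 1)

namespace Bubble

/-- `u a l x = 1 + l² ‖x-a‖²`. -/
def u (a : E5) (l : ℝ) (x : E5) : ℝ := 1 + l ^ 2 * ‖x - a‖ ^ 2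

lemma u_pos (a : E5) (l : ℝ) (x : E5) : 0 < u a l x := by
  have h : 0 ≤ l ^ 2 * ‖x - a‖ ^ 2 := by positivity
  unfold u; linarith

lemma hasFDerivAt_u (a : E5) (l : ℝ) (x : E5) :
    HasFDerivAt (u a l) ((2 * l ^ 2) • (innerSL ℝ (x - a))) x := by
  have h1 : HasFDerivAt (fun y : E5 => ‖y - a‖ ^ 2) (2 • (innerSL ℝ (x - a))) x := by
    simpa using ((hasFDerivAt_id x).sub_const a).norm_sq
  have h2 := (h1.const_mul (l ^ 2)).const_add 1
  have : (l ^ 2) • ((2:ℕ) • (innerSL ℝ (x - a))) = (2 * l ^ 2) • (innerSL ℝ (x - a)) := by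
    ext y
    simp
    ring
  rw [this] at h2
  exact h2

lemma hasFDerivAt_pow (a : E5) (l : ℝ) (c q : ℝ) (x : E5) :
    HasFDerivAt (fun y => c * u a l y ^ q)
      ((c * q * (2 * l ^ 2) * u a l x ^ (q - 1)) • (innerSL ℝ (x - a))) x := by
  have h := (Real.hasDerivAt_rpow_const (x := u a l x) (p := q)
      (Or.inl (u_pos a l x).ne')).comp_hasFDerivAt x (hasFDerivAt_u a l x)
  have h2 := h.const_mul c
  have : c • ((q * u a l x ^ (q - 1)) • ((2 * l ^ 2) • (innerSL ℝ (x - a))))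
      = (c * q * (2 * l ^ 2) * u a l x ^ (q - 1)) • (innerSL ℝ (x - a)) := by
    rw [smul_smul, smul_smul]
    congr 1
    ring
  rw [this] at h2
  exact h2

lemma single_eval (a : E5) (v : E5) (c : ℝ) (i : Fin 5) :
    (c • (innerSL ℝ v)) (EuclideanSpace.single i (1:ℝ)) = c * v i := by
  simp [EuclideanSpace.inner_single_right]

lemma hasFDerivAt_coord (a : E5) (x : E5) (i : Fin 5) :
    HasFDerivAt (fun y : E5 => y i - a i) (EuclideanSpace.proj (𝕜 := ℝ) i) x :=
  (EuclideanSpace.proj (𝕜 := ℝ) i).hasFDerivAt.sub_const (a i)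

/-- First derivative of a two-term radial function, in direction `eᵢ`. -/
lemma fderiv_two (a : E5) (l : ℝ) (c1 q1 c2 q2 : ℝ) (x : E5) (i : Fin 5) :
    fderiv ℝ (fun y => c1 * u a l y ^ q1 + c2 * u a l y ^ q2) x
        (EuclideanSpace.single i 1)
      = c1 * q1 * (2 * l ^ 2) * u a l x ^ (q1 - 1) * (x i - a i)
        + c2 * q2 * (2 * l ^ 2) * u a l x ^ (q2 - 1) * (x i - a i) := by
  have h : HasFDerivAt (fun y => c1 * u a l y ^ q1 + c2 * u a l y ^ q2) _ x :=
    (hasFDerivAt_pow a l c1 q1 x).add (hasFDerivAt_pow a l c2 q2 x)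
  rw [h.fderiv]
  simp only [ContinuousLinearMap.add_apply, single_eval]
  simp [EuclideanSpace.inner_single_right]

/-- Second derivative step: derivative of the explicit first-derivative function. -/
lemma fderiv_two2 (a : E5) (l : ℝ) (C1 p1 C2 p2 : ℝ) (x : E5) (i : Fin 5) :
    fderiv ℝ (fun y => C1 * u a l y ^ p1 * (y i - a i) + C2 * u a l y ^ p2 * (y i - a i)) x
        (EuclideanSpace.single i 1)
      = (C1 * p1 * (2 * l ^ 2) * u a l x ^ (p1 - 1) * (x i - a i) ^ 2
          + C1 * u a l x ^ p1)
        + (C2 * p2 * (2 * l ^ 2) * u a l x ^ (p2 - 1) * (x i - a i) ^ 2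
          + C2 * u a l x ^ p2) := by
  have hg := hasFDerivAt_coord a x i
  have h : HasFDerivAt
      (fun y => C1 * u a l y ^ p1 * (y i - a i) + C2 * u a l y ^ p2 * (y i - a i)) _ x :=
    ((hasFDerivAt_pow a l C1 p1 x).mul hg).add
    ((hasFDerivAt_pow a l C2 p2 x).mul hg)
  rw [h.fderiv]
  simp only [ContinuousLinearMap.add_apply, ContinuousLinearMap.smul_apply, single_eval]
  simp [EuclideanSpace.inner_single_right]
  ring

lemma norm_sq_sum (a : E5) (x : E5) :
    ∑ i : Fin 5, (x i - a i) ^ 2 = ‖x - a‖ ^ 2 := by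
  rw [← real_inner_self_eq_norm_sq, PiLp.inner_apply]
  apply Finset.sum_congr rfl
  intro i _
  simp [sq]

/-- The Laplacian of a two-term radial function. -/
lemma lap_two (a : E5) (l : ℝ) (c1 q1 c2 q2 : ℝ) (x : E5) :
    lap (fun y => c1 * u a l y ^ q1 + c2 * u a l y ^ q2) x
      = c1 * q1 * (2 * l ^ 2) *
          ((q1 - 1) * (2 * l ^ 2) * u a l x ^ (q1 - 2) * ‖x - a‖ ^ 2
            + 5 * u a l x ^ (q1 - 1))
        + c2 * q2 * (2 * l ^ 2) *
          ((q2 - 1) * (2 * l ^ 2) * u a l x ^ (q2 - 2) * ‖x - a‖ ^ 2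
            + 5 * u a l x ^ (q2 - 1)) := by
  unfold lap
  have key : ∀ i : Fin 5,
      fderiv ℝ (fun y => fderiv ℝ (fun z => c1 * u a l z ^ q1 + c2 * u a l z ^ q2) y
          (EuclideanSpace.single i 1)) x (EuclideanSpace.single i 1)
        = ((c1 * q1 * (2 * l ^ 2)) * (q1 - 1) * (2 * l ^ 2) * u a l x ^ (q1 - 2)
              * (x i - a i) ^ 2
            + (c1 * q1 * (2 * l ^ 2)) * u a l x ^ (q1 - 1))
          + ((c2 * q2 * (2 * l ^ 2)) * (q2 - 1) * (2 * l ^ 2) * u a l x ^ (q2 - 2)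
              * (x i - a i) ^ 2
            + (c2 * q2 * (2 * l ^ 2)) * u a l x ^ (q2 - 1)) := by
    intro i
    have hfun : (fun y => fderiv ℝ (fun z => c1 * u a l z ^ q1 + c2 * u a l z ^ q2) y
        (EuclideanSpace.single i 1))
        = fun y => (c1 * q1 * (2 * l ^ 2)) * u a l y ^ (q1 - 1) * (y i - a i)
          + (c2 * q2 * (2 * l ^ 2)) * u a l y ^ (q2 - 1) * (y i - a i) := by
      funext y
      rw [fderiv_two]
    rw [hfun, fderiv_two2]
    ring
  rw [Finset.sum_congr rfl (fun i _ => key i)]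
  rw [Finset.sum_add_distrib, Finset.sum_add_distrib, Finset.sum_add_distrib]
  simp only [← Finset.sum_mul, ← Finset.mul_sum, Finset.sum_const, Finset.card_univ,
    Fintype.card_fin, nsmul_eq_mul, norm_sq_sum]
  push_cast
  try ring

end Bubble

open Bubble in
/-- `Δ²δ_{a,λ} = δ_{a,λ}⁹` pointwise on `ℝ⁵`. -/
theorem stmt_0 (a : E5) (l : ℝ) (hl : 0 < l) (x : E5) :
    lap (lap (deltaFn a l)) x = (deltaFn a l x) ^ 9 := by
  set K : ℝ := c0 * l ^ ((1:ℝ)/2) with hK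
  have hδ : deltaFn a l = fun y => K * u a l y ^ (-(1:ℝ)/2) + 0 * u a l y ^ (0:ℝ) := by
    funext y
    simp [deltaFn, u, hK, mul_assoc]
  -- first Laplacian
  have hlap1 : lap (deltaFn a l)
      = fun y => (-2 * K * l ^ 2) * u a l y ^ (-(3:ℝ)/2)
        + (-3 * K * l ^ 2) * u a l y ^ (-(5:ℝ)/2) := by
    funext y
    rw [hδ, lap_two]
    have hv := u_pos a l y
    have h1 : l ^ 2 * ‖y - a‖ ^ 2 = u a l y - 1 := by simp [u]
    have he1 : (-(1:ℝ)/2 - 2) = (-(5:ℝ)/2) := by norm_num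
    have he2 : (-(1:ℝ)/2 - 1) = (-(3:ℝ)/2) := by norm_num
    rw [he1, he2]
    have e3 : u a l y ^ (-(5:ℝ)/2) * u a l y = u a l y ^ (-(3:ℝ)/2) := by
      rw [← Real.rpow_add_one hv.ne']; norm_num
    linear_combination (3 * K * l ^ 2 * u a l y ^ (-(5:ℝ)/2)) * h1 + (3 * K * l ^ 2) * e3
  -- second Laplacian
  have hv := u_pos a l x
  have h1 : l ^ 2 * ‖x - a‖ ^ 2 = u a l x - 1 := by simp [u]
  have e4 : u a l x ^ (-(9:ℝ)/2) * u a l x = u a l x ^ (-(7:ℝ)/2) := by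
    rw [← Real.rpow_add_one hv.ne']; norm_num
  have e5 : u a l x ^ (-(7:ℝ)/2) * u a l x = u a l x ^ (-(5:ℝ)/2) := by
    rw [← Real.rpow_add_one hv.ne']; norm_num
  have hlap2 : lap (lap (deltaFn a l)) x = 105 * K * l ^ 4 * u a l x ^ (-(9:ℝ)/2) := by
    rw [hlap1, lap_two]
    have he1 : (-(3:ℝ)/2 - 2) = (-(7:ℝ)/2) := by norm_num
    have he2 : (-(3:ℝ)/2 - 1) = (-(5:ℝ)/2) := by norm_num
    have he3 : (-(5:ℝ)/2 - 2) = (-(9:ℝ)/2) := by norm_num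
    have he4 : (-(5:ℝ)/2 - 1) = (-(7:ℝ)/2) := by norm_num
    rw [he1, he2, he3, he4]
    linear_combination ((-30) * K * l ^ 4 * u a l x ^ (-(7:ℝ)/2)
        + (-105) * K * l ^ 4 * u a l x ^ (-(9:ℝ)/2)) * h1
      + ((-30) * K * l ^ 4) * e5 + ((-105) * K * l ^ 4) * e4
  rw [hlap2]
  -- now the right-hand side
  have hδx : deltaFn a l x = K * u a l x ^ (-(1:ℝ)/2) := by
    simp [deltaFn, u, hK, mul_assoc]
  rw [hδx, mul_pow, mul_pow]
  have h9 : (u a l x ^ (-(1:ℝ)/2)) ^ (9:ℕ) = u a l x ^ (-(9:ℝ)/2) := by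
    rw [← Real.rpow_natCast (u a l x ^ (-(1:ℝ)/2)) 9, ← Real.rpow_mul hv.le]
    norm_num
  have hl9 : (l ^ ((1:ℝ)/2)) ^ (9:ℕ) = l ^ ((9:ℝ)/2) := by
    rw [← Real.rpow_natCast (l ^ ((1:ℝ)/2)) 9, ← Real.rpow_mul hl.le]
    norm_num
  have hc9 : (c0 : ℝ) ^ (9:ℕ) = 105 * c0 := by
    rw [c0, ← Real.rpow_natCast ((105:ℝ) ^ ((1:ℝ)/8)) 9, ← Real.rpow_mul (by norm_num)]
    nth_rewrite 2 [show (105:ℝ) = (105:ℝ) ^ (1:ℝ) by rw [Real.rpow_one]]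
    rw [← Real.rpow_add (by norm_num)]
    norm_num
  have hlpow : l ^ ((1:ℝ)/2) * l ^ (4:ℕ) = l ^ ((9:ℝ)/2) := by
    rw [← Real.rpow_natCast l 4, ← Real.rpow_add hl]
    norm_num
  rw [h9, hl9, hc9]
  rw [hK]
  linear_combination (105 * c0 * u a l x ^ (-(9:ℝ)/2)) * hlpow
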